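/- Let C be a non-singular integral affine curve over a field k of characteristic 0 with A = k[C], with Ω_{A/k} free on dt. Let V ⊆ A be a subspace with basis p_0,...,p_n, let η_1,...,η_r ∈ C(k) be pairwise distinct points, and b_1,...,b_r ≥ 1 integers with Σb_i = n. Form the (n+1)×(n+1) matrix Z over A whose first row is (p_0,...,p_n) and whose remaining rows are the evaluations (p_0^{(s)}(η_i),...,p_n^{(s)}(η_i)) for 1 ≤ i ≤ r and 0 ≤ s ≤ b_i − 1. Then det Z ≠ 0 if and only if the subspace V_0 = {f ∈ V : ord_{η_i}(f) ≥ b_i for all i} has dimension one; and in that case det Z is a nonzero element of V_0. -/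

import Mathlib

universe u

open Matrix Module

section Aux

variable {ι : Type*} [Fintype ι] [DecidableEq ι] {S : Type*} [CommRing S]

/-- determinant with a row replaced, as a linear map in the row. -/
noncomputable def detUpdateRowLin (P : Matrix ι ι S) (j : ι) : (ι → S) →ₗ[S] S where
  toFun w := (P.updateRow j w).det
  map_add' x y := P.det_updateRow_add j x y
  map_smul' s x := P.det_updateRow_smul j s x

lemma det_updateRow_expand (P : Matrix ι ι S) (j : ι) (g : ι → S) :
    (P.updateRow j g).det = ∑ v, g v * (P.updateRow j (Pi.single v 1)).det := by
  have hg : g = ∑ v, g v • (Pi.single v 1 : ι → S) := by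
    funext w
    simp [Finset.sum_apply, Pi.single_apply, mul_ite]
  calc (P.updateRow j g).det = detUpdateRowLin P j g := rfl
    _ = detUpdateRowLin P j (∑ v, g v • (Pi.single v 1 : ι → S)) := by rw [← hg]
    _ = ∑ v, g v • detUpdateRowLin P j (Pi.single v 1) := by
        rw [map_sum]
        exact Finset.sum_congr rfl fun v _ => by rw [LinearMap.map_smul]
    _ = _ := by simp [detUpdateRowLin, smul_eq_mul]

end Aux

theorem stmt16 (k : Type u) [Field k] [CharZero k]
    (A : Type u) [CommRing A] [IsDomain A] [Algebra k A]
    [Algebra.FiniteType k A] [Algebra.Smooth k A]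
    (hdim : ringKrullDim A = 1)
    (t : A)
    (hfree : ∀ ω : Ω[A⁄k], ∃! c : A, ω = c • KaehlerDifferential.D k A t)
    (d : Module.End k A)
    (hd : ∀ f : A, KaehlerDifferential.D k A f =
      d f • KaehlerDifferential.D k A t)
    (n : ℕ) (V : Submodule k A) (p : Fin (n + 1) → A)
    (hp : ∀ j, p j ∈ V) (hli : LinearIndependent k p)
    (hspan : Submodule.span k (Set.range p) = V)
    (r : ℕ) (η : Fin r → (A →ₐ[k] k)) (hη : Function.Injective η)
    (b : Fin r → ℕ) (hb : ∀ i, 1 ≤ b i) (hsum : ∑ i, b i = n)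
    (e : (Unit ⊕ (Σ i : Fin r, Fin (b i))) ≃ Fin (n + 1)) :
    let R : (Unit ⊕ (Σ i : Fin r, Fin (b i))) → Fin (n + 1) → A :=
      Sum.elim (fun _ => fun j => p j)
        (fun is => fun j => algebraMap k A (η is.1 ((d ^ (is.2 : ℕ)) (p j))))
    let Z : Matrix (Fin (n + 1)) (Fin (n + 1)) A :=
      Matrix.of fun u j => R (e.symm u) j
    let V0 : Submodule k A :=
      V ⊓ ⨅ (i : Fin r) (s : Fin (b i)),
        LinearMap.ker ((η i).toLinearMap ∘ₗ (d ^ (s : ℕ) : Module.End k A))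
    (Z.det ≠ 0 ↔ Module.finrank k V0 = 1) ∧
      (Z.det ≠ 0 → Z.det ∈ V0) := by
  classical
  intro R Z V0
  have hRdef : R = Sum.elim (fun _ => fun j => p j)
      (fun is => fun j => algebraMap k A (η is.1 ((d ^ (is.2 : ℕ)) (p j)))) := rfl
  have hZdef : Z = Matrix.of fun u j => R (e.symm u) j := rfl
  have hV0def : V0 = V ⊓ ⨅ (i : Fin r) (s : Fin (b i)),
      LinearMap.ker ((η i).toLinearMap ∘ₗ (d ^ (s : ℕ) : Module.End k A)) := rfl
  have cardS : Fintype.card ((i : Fin r) × Fin (b i)) = n := by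
    simp [Fintype.card_sigma, hsum]
  have cardι : Fintype.card (Unit ⊕ ((i : Fin r) × Fin (b i))) = n + 1 := by
    simp [Fintype.card_sum, cardS]
    omega
  set u0 : Unit ⊕ ((i : Fin r) × Fin (b i)) := Sum.inl () with hu0
  set q : Unit ⊕ ((i : Fin r) × Fin (b i)) → A := fun v => p (e v) with hq
  have hqli : LinearIndependent k q := hli.comp e e.injective
  set φ : k →+* A := algebraMap k A with hφ
  set N : Matrix (Unit ⊕ ((i : Fin r) × Fin (b i)))
      (Unit ⊕ ((i : Fin r) × Fin (b i))) k := Matrix.of fun u v =>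
    Sum.elim (fun _ => (0 : k)) (fun x => η x.1 ((d ^ (x.2 : ℕ)) (q v))) u with hN
  set c : Unit ⊕ ((i : Fin r) × Fin (b i)) → k :=
    fun v => (N.updateRow u0 (Pi.single v 1)).det with hc
  -- determinant identification
  have hrow : ∀ (v : Unit ⊕ ((i : Fin r) × Fin (b i))) (j : Fin (n + 1)),
      R v j = ((N.map φ).updateRow u0 q) v (e.symm j) := by
    intro v j
    cases v with
    | inl u =>
        have h1 : (Sum.inl u : Unit ⊕ ((i : Fin r) × Fin (b i))) = u0 := by
          simp [hu0]
        rw [h1, Matrix.updateRow_self]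
        simp [hRdef, hq, hu0, Equiv.apply_symm_apply]
    | inr x =>
        rw [Matrix.updateRow_ne (by simp [hu0])]
        simp [hRdef, hN, hq, hφ]
  have hdetZ : Z.det = ((N.map φ).updateRow u0 q).det := by
    have hZM : Z = ((N.map φ).updateRow u0 q).submatrix e.symm e.symm := by
      ext u j
      exact hrow (e.symm u) j
    rw [hZM, Matrix.det_submatrix_equiv_self]
  have hNmap : ∀ v, ((N.map φ).updateRow u0 (Pi.single v 1)).det = φ (c v) := by
    intro v
    have h1 : (N.map φ).updateRow u0 (Pi.single v 1) =
        (N.updateRow u0 (Pi.single v 1)).map φ := by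
      ext u w
      simp [Matrix.updateRow_apply, Matrix.map_apply, Pi.single_apply, apply_ite φ]
    rw [h1, ← RingHom.mapMatrix_apply, ← RingHom.map_det]
  have key : Z.det = ∑ v, c v • q v := by
    rw [hdetZ, det_updateRow_expand]
    refine Finset.sum_congr rfl fun v _ => ?_
    rw [hNmap v, hφ, Algebra.smul_def, mul_comm]
  -- membership in V0
  have hmemV : Z.det ∈ V := by
    rw [key]
    exact Submodule.sum_mem _ fun v _ => Submodule.smul_mem _ _ (hp (e v))
  have hker : ∀ (i : Fin r) (s : Fin (b i)), η i ((d ^ (s : ℕ)) Z.det) = 0 := by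
    intro i s
    have hF : η i ((d ^ (s : ℕ)) Z.det) = ∑ v, N (Sum.inr ⟨i, s⟩) v * c v := by
      rw [key, map_sum, map_sum]
      refine Finset.sum_congr rfl fun v _ => ?_
      rw [LinearMap.map_smul, _root_.map_smul]
      simp [hN, mul_comm, smul_eq_mul]
    have h0 : (N.updateRow u0 (N (Sum.inr ⟨i, s⟩))).det = 0 :=
      Matrix.det_updateRow_eq_zero (by simp [hu0])
    rw [det_updateRow_expand] at h0
    rw [hF]
    exact h0
  have hmemV0 : Z.det ∈ V0 := by
    rw [hV0def]
    refine Submodule.mem_inf.mpr ⟨hmemV, ?_⟩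
    rw [Submodule.mem_iInf]
    intro i
    rw [Submodule.mem_iInf]
    intro s
    exact hker i s
  -- nonvanishing criterion
  have hne : Z.det ≠ 0 ↔ ∃ v, c v ≠ 0 := by
    rw [key]
    constructor
    · intro h
      by_contra hn
      push_neg at hn
      exact h (by simp [hn])
    · rintro ⟨v, hv⟩ h
      exact hv (Fintype.linearIndependent_iff.mp hqli c h v)
  -- the lower matrix
  set W : Matrix ((i : Fin r) × Fin (b i)) (Unit ⊕ ((i : Fin r) × Fin (b i))) k :=
    Matrix.of fun x v => η x.1 ((d ^ (x.2 : ℕ)) (q v)) with hW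
  have hNW : ∀ x, N (Sum.inr x) = W x := by
    intro x
    funext v
    simp [hN, hW]
  -- ∃ v, c v ≠ 0  ↔  rows of W linearly independent
  have hex : (∃ v, c v ≠ 0) ↔ LinearIndependent k (fun x => W x) := by
    constructor
    · rintro ⟨v, hv⟩
      have hunit : IsUnit (N.updateRow u0 (Pi.single v 1)) := by
        rw [Matrix.isUnit_iff_isUnit_det]
        exact isUnit_iff_ne_zero.mpr hv
      have hrows := Matrix.linearIndependent_rows_iff_isUnit.mpr hunit
      have h2 := hrows.comp Sum.inr Sum.inr_injective
      have h3 : ((fun u => (N.updateRow u0 (Pi.single v 1)) u) ∘ Sum.inr) =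
          fun x => W x := by
        funext x
        rw [Function.comp_apply, Matrix.updateRow_ne (by simp [hu0]), hNW]
      change LinearIndependent k ((fun u => (N.updateRow u0 (Pi.single v 1)) u) ∘ Sum.inr) at h2
      rwa [h3] at h2
    · intro hWli
      have hfr : Module.finrank k
          (Submodule.span k (Set.range (fun x => W x))) = n := by
        rw [finrank_span_eq_card hWli]
        exact cardS
      obtain ⟨v0, hv0⟩ : ∃ v0, v0 ∉ Submodule.span k (Set.range fun x => W x) := by
        by_contra hnall
        push_neg at hnall
        have htop : Submodule.span k (Set.range fun x => W x) = ⊤ :=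
          Submodule.eq_top_iff'.mpr hnall
        rw [htop, finrank_top, Module.finrank_fintype_fun_eq_card, cardι] at hfr
        omega
      have hFrows : LinearIndependent k (fun u => (N.updateRow u0 v0) u) := by
        rw [Fintype.linearIndependent_iff]
        intro g hg
        have hsplit : g u0 • v0 + ∑ x, g (Sum.inr x) • W x = 0 := by
          have h := hg
          rw [Fintype.sum_sum_type] at h
          simpa [hu0, Matrix.updateRow_apply, hNW] using h
        have hg0 : g u0 = 0 := by
          by_contra hgne
          apply hv0
          have hmem : g u0 • v0 ∈ Submodule.span k (Set.range fun x => W x) := by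
            rw [eq_neg_of_add_eq_zero_left hsplit]
            exact Submodule.neg_mem _ (Submodule.sum_mem _ fun x _ =>
              Submodule.smul_mem _ _ (Submodule.subset_span ⟨x, rfl⟩))
          have h2 := Submodule.smul_mem _ (g u0)⁻¹ hmem
          rwa [inv_smul_smul₀ hgne] at h2
        have hrest : ∀ x, g (Sum.inr x) = 0 := by
          have hsum0 : ∑ x, g (Sum.inr x) • W x = 0 := by
            rw [hg0, zero_smul, zero_add] at hsplit
            exact hsplit
          exact fun x => Fintype.linearIndependent_iff.mp hWli _ hsum0 x
        intro u
        cases u with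
        | inl u =>
            cases u
            exact hg0
        | inr x => exact hrest x
      have hFdet : (N.updateRow u0 v0).det ≠ 0 := by
        intro h0
        have hnu : ¬ IsUnit (N.updateRow u0 v0) := by
          rw [Matrix.isUnit_iff_isUnit_det, h0]
          exact not_isUnit_zero
        exact hnu (Matrix.linearIndependent_rows_iff_isUnit.mp hFrows)
      rw [det_updateRow_expand] at hFdet
      by_contra hn
      push_neg at hn
      apply hFdet
      refine Finset.sum_eq_zero fun v _ => ?_
      rw [show (N.updateRow u0 (Pi.single v 1)).det = c v from rfl, hn v, mul_zero]
  -- the kernel description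
  set Λ : A →ₗ[k] (((i : Fin r) × Fin (b i)) → k) :=
    LinearMap.pi (fun x => (η x.1).toLinearMap ∘ₗ (d ^ (x.2 : ℕ) : Module.End k A)) with hΛ
  have hV0Λ : V0 = V ⊓ LinearMap.ker Λ := by
    rw [hV0def]
    congr 1
    ext f
    simp [hΛ, LinearMap.mem_ker, LinearMap.pi_apply, Submodule.mem_iInf, funext_iff,
      Sigma.forall]
  set Λ' : V →ₗ[k] (((i : Fin r) × Fin (b i)) → k) := Λ.comp V.subtype with hΛ'
  have hfrV0 : finrank k V0 = finrank k (LinearMap.ker Λ') := by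
    have hmap : Submodule.map V.subtype (LinearMap.ker Λ') = V0 := by
      rw [hΛ', LinearMap.ker_comp, Submodule.map_comap_subtype, hV0Λ]
    rw [← hmap]
    exact (LinearEquiv.finrank_eq
      (Submodule.equivMapOfInjective _ V.injective_subtype _)).symm
  have hfinV : finrank k V = n + 1 := by
    rw [← hspan, finrank_span_eq_card hli, Fintype.card_fin]
  have hpVmem : ∀ v, q v ∈ V := fun v => hp (e v)
  set pV : Unit ⊕ ((i : Fin r) × Fin (b i)) → V := fun v => ⟨q v, hpVmem v⟩ with hpVdef
  have hpVli : LinearIndependent k pV := by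
    apply LinearIndependent.of_comp V.subtype
    exact hqli
  have hnonempty : Nonempty (Unit ⊕ ((i : Fin r) × Fin (b i))) := ⟨u0⟩
  set B : Basis (Unit ⊕ ((i : Fin r) × Fin (b i))) k V :=
    basisOfLinearIndependentOfCardEqFinrank hpVli (by rw [cardι, hfinV]) with hB
  have hBv : ∀ v, B v = pV v := by
    intro v
    rw [hB, coe_basisOfLinearIndependentOfCardEqFinrank]
  have hΛ'W : Λ' = (Matrix.mulVecLin W).comp (B.equivFun : V →ₗ[k] _) := by
    apply B.ext
    intro v
    simp only [LinearMap.comp_apply]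
    have h1 : (B.equivFun : V →ₗ[k] _) (B v) = (Pi.single v 1 : (Unit ⊕ ((i : Fin r) × Fin (b i))) → k) := by
      funext w
      simp [Basis.equivFun_apply, Basis.repr_self, Finsupp.single_apply, Pi.single_apply,
        eq_comm]
    rw [h1]
    funext x
    simp [hΛ', hΛ, hBv, hpVdef, Matrix.mulVecLin_apply, Matrix.mulVec, dotProduct,
      Pi.single_apply, mul_ite, hW, LinearMap.pi_apply]
  have hkerW : finrank k (LinearMap.ker Λ') =
      finrank k (LinearMap.ker (Matrix.mulVecLin W)) := by
    rw [hΛ'W, LinearMap.ker_comp, Submodule.comap_equiv_eq_map_symm]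
    exact LinearEquiv.finrank_map_eq _ _
  have hrank : W.rank + finrank k (LinearMap.ker (Matrix.mulVecLin W)) = n + 1 := by
    rw [Matrix.rank, LinearMap.finrank_range_add_finrank_ker,
      Module.finrank_fintype_fun_eq_card, cardι]
  have hliWr : LinearIndependent k (fun x => W x) ↔ W.rank = n := by
    rw [Matrix.rank_eq_finrank_span_row, linearIndependent_iff_card_eq_finrank_span, cardS,
      Set.finrank]
    exact eq_comm
  constructor
  · rw [hne, hex, hliWr, hfrV0, hkerW]
    omega
  · exact fun _ => hmemV0
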